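/- Let p be an odd prime, let e ≥ 1 be an integer, and let k and l be positive integers with k ≡ l (mod p^{e−1}·((p² − 1)/2)). Then D_k(u, 1) = D_l(u, 1) in ℤ/p^eℤ for every u ∈ ℤ/p^eℤ, where D_k denotes the Dickson polynomial of the first kind evaluated over ℤ/p^eℤ. -/

import Mathlib

set_option maxHeartbeats 1000000

open Polynomial AdjoinRoot

lemma three_pow_bound (j : ℕ) : 2*j+1 ≤ 3^j := by
  induction j with
  | zero => norm_num
  | succ n ih =>
    have h3 : 3^(n+1) = 3*3^n := by ring
    have : 3*(2*n+1) ≤ 3*3^n := by omega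
    omega

lemma dickson_exists_coords {A S : Type*} [CommRing A] [CommRing S] (φ : A →+* S) (u : A) (y : S)
    (hy : y * y = φ u * y - 1) (k : ℕ) :
    ∃ a b : A, y ^ k = φ a + φ b * y ∧ (φ u - y) ^ k = φ a + φ b * (φ u - y) := by
  have hv : (φ u - y) * (φ u - y) = φ u * (φ u - y) - 1 := by linear_combination hy
  induction k with
  | zero => exact ⟨1, 0, by simp, by simp⟩
  | succ n ih =>
    obtain ⟨a, b, h1, h2⟩ := ih
    refine ⟨-b, a + b * u, ?_, ?_⟩
    · rw [pow_succ, h1]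
      simp only [map_neg, map_add, map_mul]
      linear_combination (φ b) * hy
    · rw [pow_succ, h2]
      simp only [map_neg, map_add, map_mul]
      linear_combination (φ b) * hv

lemma dickson_step {A S : Type*} [CommRing A] [CommRing S] (φ : A →+* S) (u : A) (y : S)
    (hy : y * y = φ u * y - 1) (M : ℕ)
    (h2 : y ^ M + (φ u - y) ^ M = 2)
    (h1 : y ^ (M+1) + (φ u - y) ^ (M+1) = φ u) (k : ℕ) :
    y ^ (k + M) + (φ u - y) ^ (k + M) = y ^ k + (φ u - y) ^ k := by
  obtain ⟨a, b, hk1, hk2⟩ := dickson_exists_coords φ u y hy k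
  have h1' : y ^ M * y + (φ u - y) ^ M * (φ u - y) = φ u := by
    rw [← pow_succ, ← pow_succ]; exact h1
  rw [pow_add, pow_add, hk1, hk2]
  linear_combination (φ a) * h2 + (φ b) * h1'

lemma dickson_iter {A S : Type*} [CommRing A] [CommRing S] (φ : A →+* S) (u : A) (y : S)
    (hy : y * y = φ u * y - 1) (M : ℕ)
    (h2 : y ^ M + (φ u - y) ^ M = 2)
    (h1 : y ^ (M+1) + (φ u - y) ^ (M+1) = φ u) (k : ℕ) :
    ∀ t : ℕ, y ^ (k + M * t) + (φ u - y) ^ (k + M * t) = y ^ k + (φ u - y) ^ k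
  | 0 => by simp
  | t+1 => by
    have hstep := dickson_step φ u y hy M h2 h1 (k + M * t)
    have hre : k + M * (t+1) = (k + M * t) + M := by ring
    rw [hre, hstep, dickson_iter φ u y hy M h2 h1 k t]

lemma one_add_pow_eq {S : Type*} [CommRing S] (P : ℕ) (t : S) :
    ∃ r, (1 + t) ^ (P + 2) = 1 + ((P + 2 : ℕ) : S) * t + t ^ 2 * r := by
  refine ⟨∑ i ∈ Finset.range (P+1), t ^ i * ((P+2).choose (i+2) : S), ?_⟩
  rw [add_comm (1:S) t, add_pow]
  rw [show P + 2 + 1 = (P + 1) + 1 + 1 by ring]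
  rw [Finset.sum_range_succ', Finset.sum_range_succ']
  simp only [one_pow, mul_one, pow_zero, pow_one, Nat.choose_one_right, Nat.choose_zero_right,
    Nat.cast_one, one_mul]
  rw [Finset.mul_sum]
  have : ∀ i ∈ Finset.range (P+1),
      t ^ (i+1+1) * ((P+2).choose (i+1+1) : S) = t^2 * (t^i * ((P+2).choose (i+2) : S)) := by
    intro i _
    ring
  rw [Finset.sum_congr rfl this, ← Finset.mul_sum, Nat.choose_one_right]
  push_cast
  ring

lemma one_add_p_pow {S : Type*} [CommRing S] (p : ℕ) (hp : 2 ≤ p) (w : S) :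
    ∀ j : ℕ, ∃ s : S, (1 + (p:S) * w) ^ (p ^ j) = 1 + (p:S)^(j+1) * s
  | 0 => ⟨w, by simp⟩
  | j+1 => by
    obtain ⟨s, hs⟩ := one_add_p_pow p hp w j
    obtain ⟨P, hP⟩ : ∃ P, p = P + 2 := ⟨p - 2, by omega⟩
    obtain ⟨r, hr⟩ := one_add_pow_eq P ((p:S)^(j+1) * s)
    refine ⟨s + (p:S)^j * s^2 * r, ?_⟩
    have e1 : (1 + (p:S)*w)^(p^(j+1)) = ((1 + (p:S)*w)^(p^j))^p := by
      rw [← pow_mul, pow_succ]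
    have hr' : (1 + (p:S)^(j+1)*s)^p = 1 + (p:S) * ((p:S)^(j+1)*s) + ((p:S)^(j+1)*s)^2 * r := by
      rw [hP] at hr ⊢
      exact_mod_cast hr
    rw [e1, hs, hr']
    ring

def lucasH {A : Type*} [CommRing A] (d c : A) : ℕ → A
  | 0 => 2
  | 1 => d
  | (n+2) => d * lucasH d c (n+1) + c * lucasH d c n

lemma lucasH_trace {A S : Type*} [CommRing A] [CommRing S] (φ : A →+* S) (d c : A) (z z' : S)
    (hs : z + z' = φ d) (hq : z * z' = - φ c) :
    ∀ i, z ^ i + z' ^ i = φ (lucasH d c i) := by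
  have key : ∀ i, (z ^ i + z' ^ i = φ (lucasH d c i)) ∧
      (z ^ (i+1) + z' ^ (i+1) = φ (lucasH d c (i+1))) := by
    intro i
    induction i with
    | zero => exact ⟨by simp [lucasH, map_ofNat]; norm_num, by simp [lucasH, hs]⟩
    | succ n ih =>
      obtain ⟨ih0, ih1⟩ := ih
      refine ⟨ih1, ?_⟩
      show z ^ (n+2) + z' ^ (n+2) = φ (d * lucasH d c (n+1) + c * lucasH d c n)
      rw [map_add, map_mul, map_mul, ← ih0, ← ih1, ← hs]
      linear_combination (-(z^n + z'^n)) * hq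
  exact fun i => (key i).1

lemma lucasH_dvd {A : Type*} [CommRing A] (x d c : A) (hd : x ∣ d) (hc : x ∣ c) :
    ∀ i, x ^ ((i+1)/2) ∣ lucasH d c i := by
  have key : ∀ i, (x ^ ((i+1)/2) ∣ lucasH d c i) ∧ (x ^ ((i+2)/2) ∣ lucasH d c (i+1)) := by
    intro i
    induction i with
    | zero => exact ⟨by simpa [lucasH] using one_dvd _, by simpa [lucasH] using hd⟩
    | succ n ih =>
      obtain ⟨ih0, ih1⟩ := ih
      refine ⟨ih1, ?_⟩
      show x ^ ((n+3)/2) ∣ d * lucasH d c (n+1) + c * lucasH d c n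
      have h1 : x ^ ((n+3)/2) ∣ d * lucasH d c (n+1) := by
        have : x ^ ((n+3)/2) ∣ x * x ^ ((n+2)/2) := by
          rw [← pow_succ']
          exact pow_dvd_pow x (by omega)
        exact this.trans (mul_dvd_mul hd ih1)
      have h2 : x ^ ((n+3)/2) ∣ c * lucasH d c n := by
        have : x ^ ((n+3)/2) ∣ x * x ^ ((n+1)/2) := by
          rw [← pow_succ']
          exact pow_dvd_pow x (by omega)
        exact this.trans (mul_dvd_mul hc ih0)
      exact dvd_add h1 h2
  exact fun i => (key i).1

lemma choose_pow_dvd {p E M i j w : ℕ} (hp : p.Prime) (hM : p ^ E ∣ M) (hi : 1 ≤ i)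
    (hj : j ≤ E) (hw : i = p ^ j * w) (hpw : ¬ p ∣ w) : p ^ (E - j) ∣ M.choose i := by
  rcases Nat.eq_zero_or_pos M with rfl | hMpos
  · have : i ≠ 0 := by omega
    simp [Nat.choose_eq_zero_of_lt (by omega : 0 < i)]
  obtain ⟨M₁, rfl⟩ : ∃ M₁, M = M₁ + 1 := ⟨M - 1, by omega⟩
  obtain ⟨i₁, rfl⟩ : ∃ i₁, i = i₁ + 1 := ⟨i - 1, by omega⟩
  have key : (M₁+1) * M₁.choose i₁ = (M₁+1).choose (i₁+1) * (i₁+1) :=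
    Nat.add_one_mul_choose_eq M₁ i₁
  have h1 : p ^ E ∣ (M₁+1).choose (i₁+1) * (i₁+1) := by
    rw [← key]
    exact hM.mul_right _
  have h2 : p ^ j * p ^ (E - j) ∣ p ^ j * ((M₁+1).choose (i₁+1) * w) := by
    rw [← pow_add]
    have hje : j + (E - j) = E := by omega
    rw [hje]
    have heq : (M₁+1).choose (i₁+1) * (i₁+1) = p ^ j * ((M₁+1).choose (i₁+1) * w) := by
      rw [hw]; ring
    exact heq ▸ h1
  have h3 : p ^ (E - j) ∣ (M₁+1).choose (i₁+1) * w :=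
    (Nat.mul_dvd_mul_iff_left (pow_pos hp.pos j)).mp h2
  exact (Nat.Coprime.pow_left _ (hp.coprime_iff_not_dvd.mpr hpw)).dvd_of_dvd_mul_right h3

section Quad

variable {A : Type*} [CommRing A] [Nontrivial A] (u : A)

lemma quad_monic : (X^2 - C u * X + 1 : A[X]).Monic := by
  have hq : (X^2 - C u * X + 1 : A[X]) = X^(1+1) + (1 - C u * X) := by ring
  rw [hq]
  apply monic_X_pow_add
  have h1 : degree (1 - C u * X : A[X]) ≤ 1 := by
    refine le_trans (degree_sub_le _ _) ?_
    simp only [max_le_iff]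
    exact ⟨le_trans degree_one_le (by norm_num), degree_C_mul_X_le u⟩
  exact lt_of_le_of_lt h1 (by norm_num)

lemma quad_natDegree : (X^2 - C u * X + 1 : A[X]).natDegree = 2 := by
  have hq : (X^2 - C u * X + 1 : A[X]) = C 1 * X^2 + C (-u) * X + C 1 := by
    simp only [map_one, map_neg, one_mul]
    ring
  rw [hq, natDegree_quadratic one_ne_zero]

lemma quad_rel : (root (X^2 - C u * X + 1)) * (root (X^2 - C u * X + 1))
    = (of (X^2 - C u * X + 1)) u * (root (X^2 - C u * X + 1)) - 1 := by
  have h := AdjoinRoot.mk_self (f := (X^2 - C u * X + 1 : A[X]))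
  have h2 : (mk (X^2 - C u * X + 1 : A[X])) (X^2 - C u * X + 1 : A[X])
      = (root _)^2 - (of _) u * (root _) + 1 := by
    simp only [map_add, map_sub, map_mul, map_pow, map_one, mk_X, mk_C]
  rw [h] at h2
  linear_combination - h2

lemma quad_coords_unique (a b : A)
    (h : (of (X^2 - C u * X + 1)) a + (of (X^2 - C u * X + 1)) b * root (X^2 - C u * X + 1) = 0) :
    a = 0 ∧ b = 0 := by
  have hmk : (mk (X^2 - C u * X + 1 : A[X])) (C a + C b * X) = 0 := by
    simpa only [map_add, map_mul, mk_X, mk_C] using h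
  have hdvd : (X^2 - C u * X + 1 : A[X]) ∣ (C a + C b * X) := mk_eq_zero.mp hmk
  by_cases h0 : (C a + C b * X : A[X]) = 0
  · constructor
    · have := congrArg (fun f => coeff f 0) h0
      simpa using this
    · have := congrArg (fun f => coeff f 1) h0
      simpa using this
  · exfalso
    apply (quad_monic u).not_dvd_of_natDegree_lt h0 _ hdvd
    rw [quad_natDegree]
    have : natDegree (C a + C b * X : A[X]) ≤ 1 := by
      refine le_trans (natDegree_add_le _ _) ?_
      simp only [natDegree_C, max_le_iff]
      refine ⟨by omega, ?_⟩
      refine le_trans (natDegree_mul_le) ?_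
      simp [natDegree_C]
    omega

lemma quad_coords_exists (ρ : AdjoinRoot (X^2 - C u * X + 1 : A[X])) :
    ∃ s t : A, ρ = (of _) s + (of _) t * root _ := by
  obtain ⟨f, rfl⟩ := AdjoinRoot.mk_surjective ρ
  have hmod := modByMonic_add_div f (X^2 - C u * X + 1 : A[X])
  set r := f %ₘ (X^2 - C u * X + 1 : A[X]) with hr
  have hmk : (mk (X^2 - C u * X + 1 : A[X])) f = (mk _) r := by
    rw [← hmod, map_add, map_mul, mk_self, zero_mul, add_zero]
  by_cases h0 : r = 0
  · exact ⟨0, 0, by simp [hmk, h0]⟩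
  · have hdeg : r.natDegree < 2 := by
      rw [← quad_natDegree u]
      apply natDegree_lt_natDegree h0
      exact degree_modByMonic_lt f (quad_monic u)
    have hform := eq_X_add_C_of_natDegree_le_one (by omega : r.natDegree ≤ 1)
    refine ⟨r.coeff 0, r.coeff 1, ?_⟩
    rw [hmk]
    conv_lhs => rw [hform]
    simp only [map_add, map_mul, mk_X, mk_C]
    ring

lemma quad_of_injective : Function.Injective (of (X^2 - C u * X + 1 : A[X])) := by
  intro x1 x2 h
  have h0 : (of (X^2 - C u * X + 1)) (x1 - x2) + (of (X^2 - C u * X + 1)) 0 * root _ = 0 := by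
    simp [map_sub, h]
  exact sub_eq_zero.mp (quad_coords_unique u _ _ h0).1

end Quad

lemma zmod_p_dvd_iff {p e : ℕ} (hp : p.Prime) (he : 1 ≤ e) (x : ZMod (p^e)) :
    (p : ZMod (p^e)) ∣ x ↔ (ZMod.castHom (dvd_pow_self p (by omega : e ≠ 0)) (ZMod p)) x = 0 := by
  haveI : NeZero (p^e) := ⟨pow_ne_zero e hp.pos.ne'⟩
  constructor
  · rintro ⟨t, rfl⟩
    rw [map_mul, map_natCast, ZMod.natCast_self, zero_mul]
  · intro hx
    have hval : x = ((x.val : ℕ) : ZMod (p^e)) := by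
      rw [ZMod.natCast_val, ZMod.cast_id]
    rw [hval, map_natCast] at hx
    have hdvd : p ∣ x.val := (ZMod.natCast_eq_zero_iff _ _).mp hx
    obtain ⟨t, ht⟩ := hdvd
    refine ⟨(t : ZMod (p^e)), ?_⟩
    rw [hval, ht]
    push_cast
    ring

lemma ramified_key {p e : ℕ} (hp : p.Prime) (hodd : Odd p) (he : 1 ≤ e)
    {S : Type*} [CommRing S] (φ : ZMod (p ^ e) →+* S) (u ε : ZMod (p ^ e))
    (hε : ε ^ 2 = 1) (hd : (p : ZMod (p ^ e)) ∣ (u - 2 * ε)) (y : S)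
    (hy : y * y = φ u * y - 1) :
    y ^ (p^(e-1) * ((p^2-1)/2)) + (φ u - y) ^ (p^(e-1) * ((p^2-1)/2)) = 2 ∧
    y ^ (p^(e-1) * ((p^2-1)/2) + 1) + (φ u - y) ^ (p^(e-1) * ((p^2-1)/2) + 1) = φ u := by
  set M := p^(e-1) * ((p^2-1)/2) with hM
  set d  : ZMod (p^e) := u - 2*ε with hdd
  set c'  : ZMod (p^e) := ε * d with hcc
  have hpA : (p : ZMod (p^e))^e = 0 := by
    have h0 : ((p^e : ℕ) : ZMod (p^e)) = 0 := ZMod.natCast_self _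
    push_cast at h0
    exact h0
  set z : S := y - φ ε with hz
  set z' : S := (φ u - y) - φ ε with hz'
  have hsum : z + z' = φ d := by
    rw [hz, hz', hdd]
    push_cast [map_sub, map_mul, map_ofNat]
    ring
  have hε1 : (φ ε)^2 = 1 := by rw [← map_pow, hε, map_one]
  have hprod : z * z' = - φ c' := by
    have hc'2 : φ c' = φ ε * φ u - 2 := by
      have h1 : c' = ε * u - 2 * ε^2 := by rw [hcc, hdd]; ring
      rw [h1, hε]
      push_cast [map_sub, map_mul, map_ofNat, map_one]
      ring
    rw [hz, hz', hc'2]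
    linear_combination hε1 - hy
  have htr : ∀ i, z^i + z'^i = φ (lucasH d c' i) := lucasH_trace φ d c' z z' hsum hprod
  have hdvdH : ∀ i, (p : ZMod (p^e))^((i+1)/2) ∣ lucasH d c' i :=
    lucasH_dvd (p : ZMod (p^e)) d c' hd (Dvd.dvd.mul_left hd ε)
  have hp3 : 3 ≤ p := by
    rcases hodd with ⟨r0, hr0⟩
    have := hp.two_le
    omega
  have key : ∀ i' i : ℕ, 1 ≤ i' → i' ≤ i → ((M.choose i' : ℕ) : ZMod (p^e)) * lucasH d c' i = 0 := by
    intro i' i h1 h2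
    set j := i'.factorization p with hj
    have hordproj : p ^ j ∣ i' := Nat.ordProj_dvd i' p
    by_cases hje : j ≤ e - 1
    · have hchoose : p ^ (e-1-j) ∣ M.choose i' := by
        apply choose_pow_dvd hp (dvd_mul_right _ _) h1 hje
            (Nat.ordProj_mul_ordCompl_eq_self i' p).symm
        exact Nat.not_dvd_ordCompl hp (by omega)
      have hpj_le : p ^ j ≤ i := le_trans (Nat.le_of_dvd (by omega) hordproj) h2
      have h3j : 2*j+1 ≤ p^j := le_trans (three_pow_bound j) (Nat.pow_le_pow_left hp3 j)
      have hhalf : j + 1 ≤ (i+1)/2 := by omega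
      have hH : (p : ZMod (p^e))^(j+1) ∣ lucasH d c' i :=
        dvd_trans (pow_dvd_pow _ hhalf) (hdvdH i)
      obtain ⟨C0, hC0⟩ := hchoose
      obtain ⟨H0, hH0⟩ := hH
      rw [hC0, hH0]
      have hexp : (e-1-j) + (j+1) = e := by omega
      calc ((p^(e-1-j)*C0 : ℕ) : ZMod (p^e)) * ((p : ZMod (p^e))^(j+1) * H0)
          = (p : ZMod (p^e))^((e-1-j)+(j+1)) * ((C0 : ZMod (p^e)) * H0) := by push_cast [pow_add]; ring
        _ = 0 := by rw [hexp, hpA, zero_mul]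
    · have hje' : e ≤ j := by omega
      have hdvd2 : p^e ∣ i' := dvd_trans (pow_dvd_pow p hje') hordproj
      have hpe_le : p^e ≤ i := le_trans (Nat.le_of_dvd (by omega) hdvd2) h2
      have h3e : 2*e+1 ≤ p^e := le_trans (three_pow_bound e) (Nat.pow_le_pow_left hp3 e)
      have hhalf : e ≤ (i+1)/2 := by omega
      have hH : (p : ZMod (p^e))^e ∣ lucasH d c' i := dvd_trans (pow_dvd_pow _ hhalf) (hdvdH i)
      obtain ⟨H0, hH0⟩ := hH
      rw [hH0, hpA]
      ring
  obtain ⟨r, hpr⟩ : ∃ r, p = 2*r+1 := by rcases hodd with ⟨r, h⟩; exact ⟨r, by omega⟩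
  have hcr : (p^2-1)/2 = 2*(r*r+r) := by
    have hp2 : p^2 = 4*(r*r) + 4*r + 1 := by rw [hpr]; ring
    generalize hs : r*r = s at hp2 ⊢
    generalize ht : p^2 = t at hp2 ⊢
    omega
  have hMeven : M = 2 * (p^(e-1) * (r*r+r)) := by rw [hM, hcr]; ring
  have hεM : (φ ε)^M = 1 := by
    rw [hMeven, pow_mul, hε1, one_pow]
  have hyz : y = z + φ ε := by rw [hz]; ring
  have hvz : φ u - y = z' + φ ε := by rw [hz']; ring
  have hterm : ∀ N i' i : ℕ, 1 ≤ i' → i' ≤ i →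
      z^i * (φ ε)^(N-i) * ((M.choose i' : ℕ):S) + z'^i * (φ ε)^(N-i) * ((M.choose i' : ℕ):S) = 0 := by
    intro N i' i h1 h2
    have hcomb : z^i * (φ ε)^(N-i) * ((M.choose i' : ℕ):S) + z'^i * (φ ε)^(N-i) * ((M.choose i' : ℕ):S)
        = (z^i + z'^i) * (φ ε)^(N-i) * ((M.choose i' : ℕ):S) := by ring
    rw [hcomb, htr i, ← map_pow, ← map_natCast φ ((M.choose i' : ℕ)), ← map_mul, ← map_mul]
    have h0 : lucasH d c' i * ε^(N-i) * ((M.choose i' : ℕ) : ZMod (p^e)) = 0 := by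
      calc lucasH d c' i * ε^(N-i) * ((M.choose i' : ℕ) : ZMod (p^e))
          = (((M.choose i' : ℕ) : ZMod (p^e)) * lucasH d c' i) * ε^(N-i) := by ring
        _ = 0 := by rw [key i' i h1 h2, zero_mul]
    rw [h0, map_zero]
  constructor
  · rw [hvz, hyz, add_pow, add_pow, ← Finset.sum_add_distrib, Finset.sum_range_succ']
    have hzero : ∀ i ∈ Finset.range M,
        (z ^ (i+1) * (φ ε)^(M-(i+1)) * ((M.choose (i+1) : ℕ):S)
          + z' ^ (i+1) * (φ ε)^(M-(i+1)) * ((M.choose (i+1) : ℕ):S)) = 0 := by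
      intro i _
      exact hterm M (i+1) (i+1) (by omega) le_rfl
    rw [Finset.sum_eq_zero hzero, zero_add]
    simp only [pow_zero, Nat.sub_zero, Nat.choose_zero_right, Nat.cast_one, one_mul, mul_one, hεM]
    norm_num
  · rw [hvz, hyz, add_pow, add_pow, ← Finset.sum_add_distrib]
    rw [show M + 1 + 1 = (M+1) + 1 from rfl, Finset.sum_range_succ', Finset.sum_range_succ']
    have hzero : ∀ i ∈ Finset.range M,
        (z ^ (i+1+1) * (φ ε)^(M+1-(i+1+1)) * (((M+1).choose (i+1+1) : ℕ):S)
          + z' ^ (i+1+1) * (φ ε)^(M+1-(i+1+1)) * (((M+1).choose (i+1+1) : ℕ):S)) = 0 := by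
      intro i _
      have hpascal : (M+1).choose (i+2) = M.choose (i+1) + M.choose (i+2) :=
        Nat.choose_succ_succ M (i+1)
      rw [show i+1+1 = i+2 from rfl, hpascal]
      push_cast [Nat.cast_add]
      have e1 := hterm (M+1) (i+1) (i+2) (by omega) (by omega)
      have e2 := hterm (M+1) (i+2) (i+2) (by omega) (by omega)
      push_cast at e1 e2
      linear_combination e1 + e2
    rw [Finset.sum_eq_zero hzero, zero_add]
    have hdM : d * ((M:ℕ) : ZMod (p^e)) = 0 := by
      obtain ⟨m, hm⟩ := hd
      have hMc : ((M:ℕ) : ZMod (p^e)) = (p : ZMod (p^e))^(e-1) * (((p^2-1)/2 : ℕ) : ZMod (p^e)) := by rw [hM]; push_cast; ring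
      have hpe : (p : ZMod (p^e)) * (p : ZMod (p^e))^(e-1) = 0 := by
        have h1 : (p : ZMod (p^e)) * (p : ZMod (p^e))^(e-1) = (p : ZMod (p^e))^e := by
          rw [← pow_succ']
          congr 1
          omega
        rw [h1, hpA]
      rw [hMc, ← hdd] at *
      calc d * ((p : ZMod (p^e))^(e-1) * (((p^2-1)/2 : ℕ) : ZMod (p^e)))
          = ((p : ZMod (p^e))*(p : ZMod (p^e))^(e-1)) * (m * (((p^2-1)/2 : ℕ) : ZMod (p^e))) := by rw [hm] at *; ring
        _ = 0 := by rw [hpe, zero_mul]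
    simp only [zero_add, pow_zero, pow_one, Nat.choose_zero_right, Nat.choose_one_right,
      Nat.cast_one, one_mul, mul_one, Nat.sub_zero, Nat.add_sub_cancel]
    simp only [pow_succ, hεM, one_mul, mul_one]
    have hMA : ((M+1 : ℕ) : S) = φ (((M:ℕ) : ZMod (p^e)) + 1) := by
      rw [map_add, map_one, map_natCast]
      push_cast
      ring
    rw [hMA]
    have hassoc : z * φ (((M:ℕ) : ZMod (p^e)) + 1) + z' * φ (((M:ℕ) : ZMod (p^e)) + 1) + (φ ε + φ ε)
        = (z + z') * φ (((M:ℕ) : ZMod (p^e)) + 1) + (φ ε + φ ε) := by ring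
    rw [hassoc, hsum, ← map_mul, ← map_add, ← map_add]
    congr 1
    rw [mul_add, hdM, zero_add, mul_one, hdd]
    ring

lemma unramified_key {p e : ℕ} (hp : p.Prime) (hodd : Odd p) (he : 1 ≤ e)
    (u : ZMod (p ^ e))
    (hu : (ZMod.castHom (dvd_pow_self p (by omega : e ≠ 0)) (ZMod p) u) ^ 2 ≠ 4) :
    (AdjoinRoot.root (X^2 - C u * X + 1 : (ZMod (p^e))[X])) ^ (p^(e-1) * ((p^2-1)/2)) = 1 := by
  haveI : Fact p.Prime := ⟨hp⟩
  have hp3 : 3 ≤ p := by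
    rcases hodd with ⟨r0, hr0⟩
    have := hp.two_le
    omega
  haveI : Fact (1 < p^e) := ⟨by
    calc 1 < 3 := by omega
      _ ≤ 3^e := Nat.le_self_pow (by omega) 3
      _ ≤ p^e := Nat.pow_le_pow_left hp3 e⟩
  set ψ := ZMod.castHom (dvd_pow_self p (by omega : e ≠ 0)) (ZMod p) with hψ
  set y := AdjoinRoot.root (X^2 - C u * X + 1 : (ZMod (p^e))[X]) with hyy
  set φ := AdjoinRoot.of (X^2 - C u * X + 1 : (ZMod (p^e))[X]) with hφ
  have hy : y * y = φ u * y - 1 := quad_rel u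
  have hyv : y * (φ u - y) = 1 := by linear_combination -hy
  have hpA : ((p : ZMod (p^e)))^e = 0 := by
    have h0 : ((p^e : ℕ) : ZMod (p^e)) = 0 := ZMod.natCast_self _
    push_cast at h0
    exact h0
  -- Fermat
  obtain ⟨m, hm⟩ : ∃ m : ZMod (p^e), u^p = u + p * m := by
    have hdvd : (p : ZMod (p^e)) ∣ (u^p - u) := by
      rw [zmod_p_dvd_iff hp he]
      rw [map_sub, map_pow]
      rw [ZMod.pow_card]
      ring
    obtain ⟨m, hm⟩ := hdvd
    exact ⟨m, by linear_combination hm⟩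
  -- Frobenius congruence
  obtain ⟨s, hs⟩ : ∃ s, (φ u * y + -1) ^ p = (φ u * y) ^ p + (-1) ^ p + (p : AdjoinRoot _) * s := by
    obtain ⟨s, hs⟩ := exists_add_pow_prime_eq hp (φ u * y) (-1 : AdjoinRoot (X^2 - C u * X + 1 : (ZMod (p^e))[X]))
    exact ⟨(φ u * y) * -1 * s, by rw [hs]; ring⟩
  have hup : (φ u)^p = φ u + (p : AdjoinRoot _) * φ m := by
    rw [← map_pow, hm, map_add, map_mul, map_natCast]
  have hY2 : (y^p) * (y^p) = (φ u + (p : AdjoinRoot _) * φ m) * (y^p) - 1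
      + (p : AdjoinRoot _) * s := by
    have hxy : φ u * y + (-1) = y * y := by linear_combination -hy
    have h1 : (y^p) * (y^p) = (φ u * y + (-1))^p := by
      rw [hxy, mul_pow]
    rw [h1, hs, mul_pow, hup, Odd.neg_one_pow hodd]
    ring
  have hprod : (y^p - y) * (y^p - (φ u - y)) = (p : AdjoinRoot _) * (s + φ m * y^p) := by
    linear_combination hY2 - hy
  -- arithmetic
  obtain ⟨r, hpr⟩ : ∃ r, p = 2*r+1 := by rcases hodd with ⟨r, h⟩; exact ⟨r, by omega⟩
  have hr1 : 1 ≤ r := by omega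
  have hcr : (p^2-1)/2 = 2*r*(r+1) := by
    have hp2 : p^2 = 4*(r*r) + 4*r + 1 := by rw [hpr]; ring
    have h22 : 2*r*(r+1) = 2*(r*r+r) := by ring
    rw [h22]
    generalize hs : r*r = s at hp2 ⊢
    generalize ht : p^2 = t at hp2 ⊢
    omega
  -- divisibilities
  have d1 : y^(2*r) - 1 ∣ y^(2*r*(r+1)) - 1 := by
    have h := sub_dvd_pow_sub_pow (y^(2*r)) 1 (r+1)
    rwa [← pow_mul, one_pow] at h
  have d2 : y^(2*r+2) - 1 ∣ y^(2*r*(r+1)) - 1 := by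
    have h := sub_dvd_pow_sub_pow (y^(2*r+2)) 1 r
    rwa [← pow_mul, one_pow, show (2*r+2)*r = 2*r*(r+1) by ring] at h
  have hfact : (y^(2*r) - 1) * (y^(2*r+2) - 1) = (y^p - y) * (y^p - (φ u - y)) := by
    have e1 : y^p = y^(2*r) * y := by rw [← pow_succ]; exact congrArg (fun n => y^n) hpr
    have e3 : y^(2*r+2) = y^(2*r) * (y * y) := by ring
    rw [e1, e3]
    linear_combination (1 - y^(2*r)) * hy
  obtain ⟨g0, hg0⟩ := mul_dvd_mul d1 d2
  have hw2 : (y^(2*r*(r+1)) - 1)^2 = (p : AdjoinRoot _) * ((s + φ m * y^p) * g0) := by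
    calc (y^(2*r*(r+1)) - 1)^2
        = (y^(2*r*(r+1)) - 1) * (y^(2*r*(r+1)) - 1) := by ring
      _ = ((y^(2*r) - 1) * (y^(2*r+2) - 1)) * g0 := hg0
      _ = ((y^p - y) * (y^p - (φ u - y))) * g0 := by rw [hfact]
      _ = (p : AdjoinRoot _) * ((s + φ m * y^p) * g0) := by rw [hprod]; ring
  -- coordinates
  obtain ⟨a, b, hab, _⟩ := dickson_exists_coords φ u y hy (2*r*(r+1))
  obtain ⟨s2, t2, hst⟩ := quad_coords_exists u ((s + φ m * y^p) * g0)
  have hwc : (y^(2*r*(r+1)) - 1)^2 = φ ((a-1)^2 - b^2) + φ (2*(a-1)*b + b^2*u) * y := by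
    rw [hab]
    simp only [map_sub, map_add, map_mul, map_one, map_pow, map_ofNat]
    linear_combination (φ b)^2 * hy
  have heq2 : φ ((a-1)^2 - b^2 - p * s2) + φ (2*(a-1)*b + b^2*u - p * t2) * y = 0 := by
    have h1 : φ ((a-1)^2 - b^2) + φ (2*(a-1)*b + b^2*u) * y
        = φ (p * s2) + φ (p * t2) * y := by
      rw [← hwc, hw2, hst]
      simp only [map_mul, map_natCast]
      ring
    simp only [map_sub, map_add, map_mul, map_pow, map_one, map_ofNat, map_natCast] at h1 ⊢
    linear_combination h1
  obtain ⟨hc1, hc2⟩ := quad_coords_unique u _ _ heq2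
  have hdc1 : (p : ZMod (p^e)) ∣ ((a-1)^2 - b^2) := ⟨s2, by linear_combination hc1⟩
  have hdc2 : (p : ZMod (p^e)) ∣ (2*(a-1)*b + b^2*u) := ⟨t2, by linear_combination hc2⟩
  -- field argument
  have heqα : (ψ a - 1)^2 - (ψ b)^2 = 0 := by
    have h : ψ ((a-1)^2 - b^2) = 0 := (zmod_p_dvd_iff hp he _).mp hdc1
    simp only [map_sub, map_pow, map_one] at h
    linear_combination h
  have heqβ : 2*(ψ a - 1)*(ψ b) + (ψ b)^2 * (ψ u) = 0 := by
    have h : ψ (2*(a-1)*b + b^2*u) = 0 := (zmod_p_dvd_iff hp he _).mp hdc2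
    simp only [map_add, map_sub, map_mul, map_pow, map_one, map_ofNat] at h
    linear_combination h
  obtain ⟨α, hαdef⟩ : ∃ t : ZMod p, ψ a - 1 = t := ⟨_, rfl⟩
  obtain ⟨β, hβdef⟩ : ∃ t : ZMod p, ψ b = t := ⟨_, rfl⟩
  rw [hαdef, hβdef] at heqα heqβ
  have hβ0 : β = 0 := by
    by_contra hb
    have h12 : (α - β) * (α + β) = 0 := by linear_combination heqα
    rcases mul_eq_zero.mp h12 with h | h
    · have hαβ : α = β := by linear_combination h
      rw [hαβ] at heqβ
      have : β^2 * (ψ u + 2) = 0 := by linear_combination heqβ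
      rcases mul_eq_zero.mp this with h2 | h2
      · exact hb (sq_eq_zero_iff.mp h2)
      · apply hu
        have : ψ u = -2 := by linear_combination h2
        rw [this]
        ring
    · have hαβ : α = -β := by linear_combination h
      rw [hαβ] at heqβ
      have : β^2 * (ψ u - 2) = 0 := by linear_combination heqβ
      rcases mul_eq_zero.mp this with h2 | h2
      · exact hb (sq_eq_zero_iff.mp h2)
      · apply hu
        have : ψ u = 2 := by linear_combination h2
        rw [this]
        ring
  have hα0 : α = 0 := by
    rw [hβ0] at heqα
    have h2 : α^2 = 0 := by linear_combination heqα
    exact sq_eq_zero_iff.mp h2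
  -- lift
  obtain ⟨a1, ha1⟩ : (p : ZMod (p^e)) ∣ (a - 1) := by
    refine (zmod_p_dvd_iff hp he _).mpr ?_
    show ψ (a - 1) = 0
    rw [map_sub, map_one, hαdef, hα0]
  obtain ⟨b1, hb1⟩ : (p : ZMod (p^e)) ∣ b := by
    refine (zmod_p_dvd_iff hp he _).mpr ?_
    show ψ b = 0
    rw [hβdef, hβ0]
  have ha1' : a = 1 + (p : ZMod (p^e)) * a1 := by linear_combination ha1
  have hyc : y^(2*r*(r+1)) = 1 + (p : AdjoinRoot _) * (φ a1 + φ b1 * y) := by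
    rw [hab, ha1', hb1]
    simp only [map_mul, map_natCast, map_add, map_one]
    ring
  obtain ⟨s3, hs3⟩ := one_add_p_pow p hp.two_le (φ a1 + φ b1 * y) (e-1)
  have hpRe : ((p : AdjoinRoot (X^2 - C u * X + 1 : (ZMod (p^e))[X])))^(e-1+1) = 0 := by
    have h1 : ((p : ZMod (p^e)) : AdjoinRoot (X^2 - C u * X + 1 : (ZMod (p^e))[X]))^(e-1+1)
        = φ ((p : ZMod (p^e))^(e-1+1)) := by rw [map_pow]
    rw [show e-1+1 = e by omega] at h1 ⊢
    rw [show ((p:ℕ) : AdjoinRoot (X^2 - C u * X + 1 : (ZMod (p^e))[X])) = φ ((p:ℕ) : ZMod (p^e)) by rw [map_natCast]]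
    rw [h1, hpA, map_zero]
  rw [show p^(e-1) * ((p^2-1)/2) = (2*r*(r+1)) * p^(e-1) by rw [hcr]; ring]
  rw [pow_mul, hyc, hs3, hpRe, zero_mul, add_zero]

lemma dickson_aux (p : ℕ) (hp : p.Prime) (hodd : Odd p) (e : ℕ) (he : 1 ≤ e) (k l : ℕ)
    (hkl : k ≡ l [MOD p ^ (e - 1) * ((p ^ 2 - 1) / 2)]) (hlk : l ≤ k) (u : ZMod (p ^ e)) :
    Polynomial.eval u (Polynomial.dickson 1 1 k) = Polynomial.eval u (Polynomial.dickson 1 1 l) := by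
  haveI : Fact p.Prime := ⟨hp⟩
  have hp3 : 3 ≤ p := by
    rcases hodd with ⟨r0, hr0⟩
    have := hp.two_le
    omega
  haveI : Fact (1 < p^e) := ⟨by
    calc 1 < 3 := by omega
      _ ≤ 3^e := Nat.le_self_pow (by omega) 3
      _ ≤ p^e := Nat.pow_le_pow_left hp3 e⟩
  set M := p ^ (e - 1) * ((p ^ 2 - 1) / 2) with hM
  set ψ := ZMod.castHom (dvd_pow_self p (by omega : e ≠ 0)) (ZMod p) with hψ
  set φ := AdjoinRoot.of (X^2 - C u * X + 1 : (ZMod (p^e))[X]) with hφ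
  set y := AdjoinRoot.root (X^2 - C u * X + 1 : (ZMod (p^e))[X]) with hyy
  have hy : y * y = φ u * y - 1 := quad_rel u
  have hyv : y * (φ u - y) = 1 := by linear_combination -hy
  have keyP : y^M + (φ u - y)^M = 2 ∧ y^(M+1) + (φ u - y)^(M+1) = φ u := by
    by_cases h2 : ψ u = 2
    · apply ramified_key hp hodd he φ u 1 (by ring) ?_ y hy
      refine (zmod_p_dvd_iff hp he _).mpr ?_
      show ψ (u - 2*1) = 0
      rw [show u - 2*1 = u - 2 by ring, map_sub, h2, map_ofNat, sub_self]
    · by_cases h2' : ψ u = -2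
      · apply ramified_key hp hodd he φ u (-1) (by ring) ?_ y hy
        refine (zmod_p_dvd_iff hp he _).mpr ?_
        show ψ (u - 2*(-1)) = 0
        rw [show u - 2*(-1) = u + 2 by ring, map_add, h2', map_ofNat]
        ring
      · have hu : (ψ u)^2 ≠ 4 := by
          intro hc
          have hfac : (ψ u - 2) * (ψ u + 2) = 0 := by linear_combination hc
          rcases mul_eq_zero.mp hfac with h | h
          · exact h2 (by linear_combination h)
          · exact h2' (by linear_combination h)
        have hyM : y ^ M = 1 := unramified_key hp hodd he u hu
        have hvM : (φ u - y)^M = 1 := by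
          have h1 : (y * (φ u - y))^M = 1 := by rw [hyv, one_pow]
          rw [mul_pow, hyM, one_mul] at h1
          exact h1
        constructor
        · rw [hyM, hvM]; norm_num
        · have e1 : y^(M+1) = y^M * y := pow_succ y M
          have e2 : (φ u - y)^(M+1) = (φ u - y)^M * (φ u - y) := pow_succ _ M
          rw [e1, e2, hyM, hvM, one_mul, one_mul]
          ring
  obtain ⟨t, ht⟩ : ∃ t, k = l + M * t := by
    have hdvd : M ∣ k - l := (Nat.modEq_iff_dvd' hlk).mp hkl.symm
    obtain ⟨t, ht⟩ := hdvd
    exact ⟨t, by omega⟩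
  have hiter := dickson_iter φ u y hy M keyP.1 keyP.2 l t
  have htrans : ∀ n : ℕ, φ (Polynomial.eval u (Polynomial.dickson 1 1 n))
      = y^n + (φ u - y)^n := by
    intro n
    have h1 : φ (Polynomial.eval u (Polynomial.dickson 1 1 n))
        = eval₂ φ (φ u) (Polynomial.dickson 1 1 n) := (Polynomial.eval₂_hom φ u).symm
    rw [h1, ← Polynomial.eval_map, Polynomial.map_dickson, map_one]
    have h3 : y + (φ u - y) = φ u := by ring
    conv_lhs => rw [← h3]
    exact Polynomial.dickson_one_one_eval_add_inv y (φ u - y) hyv n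
  apply quad_of_injective u
  rw [htrans k, htrans l, ht, hiter]

theorem dickson_eval_congr_odd_prime_pow (p : ℕ) (hp : p.Prime) (hodd : Odd p)
    (e : ℕ) (he : 1 ≤ e) (k l : ℕ) (hk : 0 < k) (hl : 0 < l)
    (hkl : k ≡ l [MOD p ^ (e - 1) * ((p ^ 2 - 1) / 2)]) (u : ZMod (p ^ e)) :
    Polynomial.eval u (Polynomial.dickson 1 1 k) = Polynomial.eval u (Polynomial.dickson 1 1 l) := by
  rcases le_total l k with h | h
  · exact dickson_aux p hp hodd e he k l hkl h u
  · exact (dickson_aux p hp hodd e he l k hkl.symm h u).symm
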